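/- arXiv:2404.01595 — 4 statements merged into one kernel-verified Lean document; each statement's English description precedes it below -/
import Mathlib

section
/- For a discrete treatment t and random variable Z, the conditional mutual information I(t; Z | π(Z)) = 0, where π(Z) = (P(t = k | Z))_k is the propensity score. Equivalently, t is conditionally independent of Z given π(Z). -/
open MeasureTheory ProbabilityTheory

/-- `t` is conditionally independent of `Z` given the propensity score
`π(Z) = (P(t = k | Z))_k` (equivalently, `I(t; Z | π(Z)) = 0`). -/
theorem treatment_condIndep_given_propensity
    {Ω 𝒵 : Type*} [MeasurableSpace Ω] [StandardBorelSpace Ω] [Nonempty Ω]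
    [MeasurableSpace 𝒵]
    (μ : Measure Ω) [IsProbabilityMeasure μ] {T : ℕ}
    (Z : Ω → 𝒵) (t : Ω → Fin (T + 1)) (π : 𝒵 → Fin (T + 1) → ℝ)
    (hZ : Measurable Z) (ht : Measurable t)
    (hπ : Measurable π)
    (hπ_version : ∀ k : Fin (T + 1),
      (fun ω => π (Z ω) k)
        =ᵐ[μ]
      μ[(fun ω => if t ω = k then (1 : ℝ) else 0) | MeasurableSpace.comap Z inferInstance]) :
    CondIndepFun (MeasurableSpace.comap (fun ω => π (Z ω)) inferInstance)
      ((hπ.comp hZ).comap_le) t Z μ := by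
  classical
  have hmle : (MeasurableSpace.comap (fun ω => π (Z ω)) inferInstance) ≤ (MeasurableSpace.comap Z inferInstance) := by
    rintro s ⟨S, hS, rfl⟩
    exact ⟨π ⁻¹' S, hπ hS, rfl⟩
  have hmZΩ : (MeasurableSpace.comap Z inferInstance) ≤ (inferInstance : MeasurableSpace Ω) := hZ.comap_le
  have hmπΩ : (MeasurableSpace.comap (fun ω => π (Z ω)) inferInstance) ≤ (inferInstance : MeasurableSpace Ω) := hmle.trans hmZΩ
  haveI : SigmaFinite (μ.trim hmZΩ) := inferInstance
  haveI : SigmaFinite (μ.trim hmπΩ) := inferInstance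
  -- measurability of the propensity components w.r.t. `(MeasurableSpace.comap (fun ω => π (Z ω)) inferInstance)`
  have hπZmeas : Measurable[(MeasurableSpace.comap (fun ω => π (Z ω)) inferInstance)] (fun ω => π (Z ω)) := Measurable.of_comap_le le_rfl
  have hπk : ∀ k : Fin (T + 1), StronglyMeasurable[(MeasurableSpace.comap (fun ω => π (Z ω)) inferInstance)] (fun ω => π (Z ω) k) := fun k =>
    Measurable.stronglyMeasurable
      (show Measurable[(MeasurableSpace.comap (fun ω => π (Z ω)) inferInstance)] (fun ω => π (Z ω) k) from (measurable_pi_apply k).comp hπZmeas)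
  -- integrability of the propensity components
  have hπint : ∀ k : Fin (T + 1), Integrable (fun ω => π (Z ω) k) μ := fun k =>
    integrable_condExp.congr (hπ_version k).symm
  -- indicator integrability
  have hindint : ∀ A : Set Ω, MeasurableSet A →
      Integrable (A.indicator fun _ => (1 : ℝ)) μ := fun A hA =>
    (integrable_const (1 : ℝ)).indicator hA
  have hπbd : ∀ k : Fin (T + 1), ∀ (g : Ω → ℝ), (∀ ω, ‖g ω‖ ≤ 1) →
      AEStronglyMeasurable g μ →
      Integrable (fun ω => π (Z ω) k * g ω) μ := by
    intro k g hg hgm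
    have := (hπint k).bdd_mul (c := 1) hgm (Filter.Eventually.of_forall hg)
    exact this.congr (Filter.Eventually.of_forall fun ω => mul_comm _ _)
  have hindbd : ∀ (A : Set Ω), ∀ ω, ‖A.indicator (fun _ => (1:ℝ)) ω‖ ≤ 1 := by
    intro A ω
    by_cases h : ω ∈ A <;> simp [Set.indicator_apply, h]
  -- STEP B : conditional expectation of the treatment indicator given `(MeasurableSpace.comap (fun ω => π (Z ω)) inferInstance)`
  have hB : ∀ k : Fin (T + 1),
      (μ⟦t ⁻¹' {k} | (MeasurableSpace.comap (fun ω => π (Z ω)) inferInstance)⟧) =ᵐ[μ] fun ω => π (Z ω) k := by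
    intro k
    have hindeq : (Set.indicator (t ⁻¹' {k}) fun _ => (1 : ℝ))
        = fun ω => if t ω = k then (1 : ℝ) else 0 := by
      funext ω
      by_cases h : t ω = k <;> simp [Set.indicator_apply, h]
    calc (μ⟦t ⁻¹' {k} | (MeasurableSpace.comap (fun ω => π (Z ω)) inferInstance)⟧)
        = μ[(fun ω => if t ω = k then (1 : ℝ) else 0) | (MeasurableSpace.comap (fun ω => π (Z ω)) inferInstance)] := by rw [hindeq]
      _ =ᵐ[μ] μ[μ[(fun ω => if t ω = k then (1 : ℝ) else 0) | (MeasurableSpace.comap Z inferInstance)] | (MeasurableSpace.comap (fun ω => π (Z ω)) inferInstance)] :=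
          (condExp_condExp_of_le hmle hmZΩ).symm
      _ =ᵐ[μ] μ[(fun ω => π (Z ω) k) | (MeasurableSpace.comap (fun ω => π (Z ω)) inferInstance)] := condExp_congr_ae (hπ_version k).symm
      _ = fun ω => π (Z ω) k := condExp_of_stronglyMeasurable hmπΩ (hπk k) (hπint k)
  -- STEP A : factorization for a single treatment value
  have hA : ∀ (k : Fin (T + 1)) (B : Set 𝒵), MeasurableSet B →
      (μ⟦t ⁻¹' {k} ∩ Z ⁻¹' B | (MeasurableSpace.comap (fun ω => π (Z ω)) inferInstance)⟧)
        =ᵐ[μ] fun ω => π (Z ω) k * (μ⟦Z ⁻¹' B | (MeasurableSpace.comap (fun ω => π (Z ω)) inferInstance)⟧) ω := by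
    intro k B hBm
    have hZBm : MeasurableSet (Z ⁻¹' B) := hZ hBm
    have hZBmZ : MeasurableSet[(MeasurableSpace.comap Z inferInstance)] (Z ⁻¹' B) := ⟨B, hBm, rfl⟩
    have hindmul : (Set.indicator (t ⁻¹' {k} ∩ Z ⁻¹' B) fun _ => (1 : ℝ))
        = (Set.indicator (Z ⁻¹' B) fun _ => (1 : ℝ)) * fun ω => if t ω = k then (1 : ℝ) else 0 := by
      funext ω
      by_cases h1 : t ω = k <;> by_cases h2 : Z ω ∈ B <;>
        simp [Set.indicator_apply, h1, h2]
    -- pull-out at the level of `(MeasurableSpace.comap Z inferInstance)`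
    have s1 : μ[(Set.indicator (t ⁻¹' {k} ∩ Z ⁻¹' B) fun _ => (1 : ℝ)) | (MeasurableSpace.comap Z inferInstance)]
        =ᵐ[μ] fun ω => π (Z ω) k * Set.indicator (Z ⁻¹' B) (fun _ => (1 : ℝ)) ω := by
      rw [hindmul]
      have h1 := condExp_mul_of_stronglyMeasurable_left (m := (MeasurableSpace.comap Z inferInstance)) (μ := μ)
        (f := Set.indicator (Z ⁻¹' B) fun _ => (1 : ℝ))
        (g := fun ω => if t ω = k then (1 : ℝ) else 0)
        (stronglyMeasurable_const.indicator hZBmZ)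
        (by
          rw [← hindmul]
          exact hindint _ ((ht (MeasurableSet.singleton k)).inter hZBm))
        (by
          have : (fun ω => if t ω = k then (1 : ℝ) else 0)
              = Set.indicator (t ⁻¹' {k}) fun _ => (1 : ℝ) := by
            funext ω; by_cases h : t ω = k <;> simp [Set.indicator_apply, h]
          rw [this]; exact hindint _ (ht (MeasurableSet.singleton k)))
      refine h1.trans ?_
      filter_upwards [hπ_version k] with ω hω
      simp only [Pi.mul_apply]
      rw [← hω, mul_comm]
    -- tower + pull-out at the level of `(MeasurableSpace.comap (fun ω => π (Z ω)) inferInstance)`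
    calc (μ⟦t ⁻¹' {k} ∩ Z ⁻¹' B | (MeasurableSpace.comap (fun ω => π (Z ω)) inferInstance)⟧)
        =ᵐ[μ] μ[μ[(Set.indicator (t ⁻¹' {k} ∩ Z ⁻¹' B) fun _ => (1 : ℝ)) | (MeasurableSpace.comap Z inferInstance)] | (MeasurableSpace.comap (fun ω => π (Z ω)) inferInstance)] :=
          (condExp_condExp_of_le hmle hmZΩ).symm
      _ =ᵐ[μ] μ[(fun ω => π (Z ω) k * Set.indicator (Z ⁻¹' B) (fun _ => (1 : ℝ)) ω) | (MeasurableSpace.comap (fun ω => π (Z ω)) inferInstance)] :=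
          condExp_congr_ae s1
      _ =ᵐ[μ] fun ω => π (Z ω) k * (μ⟦Z ⁻¹' B | (MeasurableSpace.comap (fun ω => π (Z ω)) inferInstance)⟧) ω := by
          have h2 := condExp_mul_of_stronglyMeasurable_left (m := (MeasurableSpace.comap (fun ω => π (Z ω)) inferInstance)) (μ := μ)
            (f := fun ω => π (Z ω) k)
            (g := Set.indicator (Z ⁻¹' B) fun _ => (1 : ℝ))
            (hπk k)
            (hπbd k _ (hindbd _) (hindint _ hZBm).aestronglyMeasurable)
            (hindint _ hZBm)
          exact h2
  -- assemble
  rw [condIndepFun_iff_condExp_inter_preimage_eq_mul ht hZ]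
  intro s B hs hBm
  set F : Finset (Fin (T + 1)) := Finset.univ.filter (· ∈ s) with hF_def
  have hsum : (Set.indicator (t ⁻¹' s ∩ Z ⁻¹' B) fun _ => (1 : ℝ))
      = ∑ k ∈ F, Set.indicator (t ⁻¹' {k} ∩ Z ⁻¹' B) fun _ => (1 : ℝ) := by
    funext ω
    rw [Finset.sum_apply]
    have : ∀ k ∈ F, Set.indicator (t ⁻¹' {k} ∩ Z ⁻¹' B) (fun _ => (1 : ℝ)) ω
        = if t ω = k then Set.indicator (Z ⁻¹' B) (fun _ => (1:ℝ)) ω else 0 := by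
      intro k _
      by_cases h1 : t ω = k <;> by_cases h2 : Z ω ∈ B <;> simp [Set.indicator_apply, h1, h2]
    rw [Finset.sum_congr rfl this]
    simp only [Finset.sum_ite_eq]
    by_cases hts : t ω ∈ s <;> by_cases h2 : Z ω ∈ B <;>
      simp [hF_def, Set.indicator_apply, hts, h2]
  have hsum2 : (Set.indicator (t ⁻¹' s) fun _ => (1 : ℝ))
      = ∑ k ∈ F, Set.indicator (t ⁻¹' {k}) fun _ => (1 : ℝ) := by
    funext ω
    rw [Finset.sum_apply]
    have : ∀ k ∈ F, Set.indicator (t ⁻¹' {k}) (fun _ => (1 : ℝ)) ω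
        = if t ω = k then 1 else 0 := by
      intro k _
      by_cases h1 : t ω = k <;> simp [Set.indicator_apply, h1]
    rw [Finset.sum_congr rfl this]
    simp only [Finset.sum_ite_eq]
    by_cases hts : t ω ∈ s <;> simp [hF_def, Set.indicator_apply, hts]
  have hLHS : (μ⟦t ⁻¹' s ∩ Z ⁻¹' B | (MeasurableSpace.comap (fun ω => π (Z ω)) inferInstance)⟧)
      =ᵐ[μ] fun ω => (∑ k ∈ F, π (Z ω) k) * (μ⟦Z ⁻¹' B | (MeasurableSpace.comap (fun ω => π (Z ω)) inferInstance)⟧) ω := by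
    calc (μ⟦t ⁻¹' s ∩ Z ⁻¹' B | (MeasurableSpace.comap (fun ω => π (Z ω)) inferInstance)⟧)
        = μ[(∑ k ∈ F, Set.indicator (t ⁻¹' {k} ∩ Z ⁻¹' B) fun _ => (1 : ℝ)) | (MeasurableSpace.comap (fun ω => π (Z ω)) inferInstance)] := by
          rw [hsum]
      _ =ᵐ[μ] ∑ k ∈ F, (μ⟦t ⁻¹' {k} ∩ Z ⁻¹' B | (MeasurableSpace.comap (fun ω => π (Z ω)) inferInstance)⟧) :=
          condExp_finsetSum (fun k _ =>
            hindint _ ((ht (MeasurableSet.singleton k)).inter (hZ hBm))) _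
      _ =ᵐ[μ] fun ω => (∑ k ∈ F, π (Z ω) k) * (μ⟦Z ⁻¹' B | (MeasurableSpace.comap (fun ω => π (Z ω)) inferInstance)⟧) ω := by
          have h := eventuallyEq_sum (fun k (_ : k ∈ F) => hA k B hBm)
          refine h.trans ?_
          filter_upwards with ω
          rw [Finset.sum_apply]
          rw [Finset.sum_mul]
    -- done
  have hT1 : (μ⟦t ⁻¹' s | (MeasurableSpace.comap (fun ω => π (Z ω)) inferInstance)⟧) =ᵐ[μ] fun ω => ∑ k ∈ F, π (Z ω) k := by
    calc (μ⟦t ⁻¹' s | (MeasurableSpace.comap (fun ω => π (Z ω)) inferInstance)⟧)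
        = μ[(∑ k ∈ F, Set.indicator (t ⁻¹' {k}) fun _ => (1 : ℝ)) | (MeasurableSpace.comap (fun ω => π (Z ω)) inferInstance)] := by rw [hsum2]
      _ =ᵐ[μ] ∑ k ∈ F, (μ⟦t ⁻¹' {k} | (MeasurableSpace.comap (fun ω => π (Z ω)) inferInstance)⟧) :=
          condExp_finsetSum (fun k _ => hindint _ (ht (MeasurableSet.singleton k))) _
      _ =ᵐ[μ] fun ω => ∑ k ∈ F, π (Z ω) k := by
          have h := eventuallyEq_sum (fun k (_ : k ∈ F) => hB k)
          refine h.trans ?_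
          filter_upwards with ω
          rw [Finset.sum_apply]
  refine hLHS.trans ?_
  filter_upwards [hT1] with ω h1
  rw [h1]
end

section
/- If b(Z) is any function of Z such that t is conditionally independent of Z given b(Z) (i.e., b is a balancing score), then the propensity score π(Z) = P(t | Z) is a measurable function of b(Z): there exists g with π(Z) = g(b(Z)) almost surely. -/
open MeasureTheory ProbabilityTheory

/-- Key step: under conditional independence `t ⫫ Z | m` with `m ≤ σ(Z)`, the conditional
expectation of the indicator of `t ⁻¹' s` given `m` is also a version of the conditional
expectation given `σ(Z)`. -/
theorem condexp_indicator_eq_of_condIndepFun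
    {Ω 𝒵 : Type*} {m : MeasurableSpace Ω} [mΩ : MeasurableSpace Ω] [StandardBorelSpace Ω]
    [MeasurableSpace 𝒵] {β : Type*} [MeasurableSpace β]
    (μ : Measure Ω) [IsProbabilityMeasure μ]
    (Z : Ω → 𝒵) (t : Ω → β) (hZ : Measurable Z) (ht : Measurable t)
    (hm : m ≤ mΩ) (hmZ : m ≤ MeasurableSpace.comap Z inferInstance)
    (hbal : CondIndepFun m hm t Z μ) {s : Set β} (hs : MeasurableSet s) :
    (μ⟦t ⁻¹' s | m⟧) =ᵐ[μ] μ⟦t ⁻¹' s | MeasurableSpace.comap Z inferInstance⟧ := by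
  have h_iff := (condIndepFun_iff_condExp_inter_preimage_eq_mul (m' := m) (hm' := hm)
    ht hZ (μ := μ)).mp hbal
  set B : Set Ω := t ⁻¹' s with hB
  have hBmeas : MeasurableSet B := ht hs
  refine ae_eq_condExp_of_forall_setIntegral_eq hZ.comap_le
    ((integrable_const (1 : ℝ)).indicator hBmeas)
    (fun u _ _ => integrable_condExp.integrableOn) ?_ ?_
  swap
  · exact (StronglyMeasurable.aestronglyMeasurable (stronglyMeasurable_condExp.mono hmZ))
  rintro u hu hμu
  obtain ⟨A, hA, rfl⟩ := hu
  have huZ : MeasurableSet (Z ⁻¹' A) := hZ hA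
  -- both sides equal (μ (B ∩ Z ⁻¹' A)).toReal
  have h_rhs : ∫ x in Z ⁻¹' A, B.indicator (fun _ => (1:ℝ)) x ∂μ
      = (μ (B ∩ Z ⁻¹' A)).toReal := by
    rw [integral_indicator_const _ hBmeas, measureReal_def, Measure.restrict_apply hBmeas, smul_eq_mul, mul_one]
  rw [h_rhs]
  -- LHS
  set F : Ω → ℝ := μ⟦B | m⟧ with hF
  set G : Ω → ℝ := (Z ⁻¹' A).indicator (fun _ => (1:ℝ)) with hG
  have hG_int : Integrable G μ := (integrable_const (1:ℝ)).indicator huZ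
  have hFG_int : Integrable (F * G) μ := by
    have hGb : ∃ C, ∀ x, ‖G x‖ ≤ C := by
      refine ⟨1, fun x => ?_⟩
      by_cases hx : x ∈ Z ⁻¹' A <;> simp [hG, Set.indicator_apply, hx]
    have h := Integrable.bdd_mul (integrable_condExp (m := m) (f := B.indicator fun _ => (1:ℝ)))
      hG_int.aestronglyMeasurable (Filter.Eventually.of_forall hGb.choose_spec)
    exact h.congr (Filter.Eventually.of_forall fun x => mul_comm _ _)
  have h1 : ∫ x in Z ⁻¹' A, F x ∂μ = ∫ x, (F * G) x ∂μ := by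
    rw [← integral_indicator huZ]
    congr 1
    ext x
    by_cases hx : x ∈ Z ⁻¹' A <;> simp [hG, Set.indicator_apply, hx]
  have h2 : ∫ x, (F * G) x ∂μ = ∫ x, (μ[F * G | m]) x ∂μ := (integral_condExp hm).symm
  have h3 : μ[F * G | m] =ᵐ[μ] F * μ[G | m] :=
    condExp_mul_of_stronglyMeasurable_left stronglyMeasurable_condExp hFG_int hG_int
  have h4 : F * μ[G | m] =ᵐ[μ] μ⟦B ∩ Z ⁻¹' A | m⟧ := by
    have := h_iff s A hs hA
    filter_upwards [this] with x hx
    simpa [hB, hG, Set.inter_comm] using hx.symm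
  have h5 : ∫ x, (μ⟦B ∩ Z ⁻¹' A | m⟧) x ∂μ = (μ (B ∩ Z ⁻¹' A)).toReal := by
    rw [integral_condExp hm, integral_indicator_const _ (hBmeas.inter huZ), measureReal_def,
      smul_eq_mul, mul_one]
  rw [h1, h2, integral_congr_ae (h3.trans h4), h5]

/-- If `b(Z)` is a balancing score, i.e. `t ⫫ Z | b(Z)`, then the propensity
score `π(Z)` is a measurable function of `b(Z)` almost surely. -/
theorem propensity_factors_through_balancing_score
    {Ω 𝒵 ℬ : Type*} [MeasurableSpace Ω] [StandardBorelSpace Ω] [Nonempty Ω]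
    [MeasurableSpace 𝒵] [MeasurableSpace ℬ]
    (μ : Measure Ω) [IsProbabilityMeasure μ] {T : ℕ}
    (Z : Ω → 𝒵) (t : Ω → Fin (T + 1)) (π : 𝒵 → Fin (T + 1) → ℝ) (b : 𝒵 → ℬ)
    (hZ : Measurable Z) (ht : Measurable t) (hπ : Measurable π) (hb : Measurable b)
    (hπ_version : ∀ k : Fin (T + 1),
      (fun ω => π (Z ω) k)
        =ᵐ[μ]
      μ[(fun ω => if t ω = k then (1 : ℝ) else 0) | MeasurableSpace.comap Z inferInstance])
    (hbal : CondIndepFun (MeasurableSpace.comap (fun ω => b (Z ω)) inferInstance)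
      ((hb.comp hZ).comap_le) t Z μ) :
    ∃ g : ℬ → Fin (T + 1) → ℝ, Measurable g ∧
      (fun ω => π (Z ω)) =ᵐ[μ] fun ω => g (b (Z ω)) := by
  have hmZ : MeasurableSpace.comap (fun ω => b (Z ω)) inferInstance
      ≤ MeasurableSpace.comap Z inferInstance := by
    calc MeasurableSpace.comap (fun ω => b (Z ω)) inferInstance
        = (MeasurableSpace.comap b inferInstance).comap Z := by
          rw [MeasurableSpace.comap_comp]; rfl
      _ ≤ MeasurableSpace.comap Z inferInstance :=
          MeasurableSpace.comap_mono hb.comap_le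
  refine ⟨fun x k => (condDistrib t (fun ω => b (Z ω)) μ x {k}).toReal, ?_, ?_⟩
  · refine measurable_pi_lambda _ fun k => ?_
    exact (Kernel.measurable_coe _ (measurableSet_singleton k)).ennreal_toReal
  · have h_all : ∀ k : Fin (T + 1),
        (fun ω => π (Z ω) k) =ᵐ[μ]
          fun ω => (condDistrib t (fun ω => b (Z ω)) μ (b (Z ω)) {k}).toReal := by
      intro k
      have h0 : (fun ω => if t ω = k then (1:ℝ) else 0)
          = (t ⁻¹' {k}).indicator (fun _ => (1:ℝ)) := by
        ext ω; by_cases h : t ω = k <;> simp [Set.indicator_apply, h]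
      have h1 : (fun ω => π (Z ω) k) =ᵐ[μ]
          μ⟦t ⁻¹' {k} | MeasurableSpace.comap Z inferInstance⟧ := by
        have := hπ_version k
        rwa [h0] at this
      have h2 := condexp_indicator_eq_of_condIndepFun μ Z t hZ ht
        ((hb.comp hZ).comap_le) hmZ hbal (measurableSet_singleton k)
      have h3 := condDistrib_ae_eq_condExp (μ := μ)
        (X := fun ω => b (Z ω)) (Y := t) (hb.comp hZ) ht (measurableSet_singleton k)
      exact h1.trans (h2.symm.trans h3.symm)
    have h_ae : ∀ᵐ ω ∂μ, ∀ k : Fin (T + 1),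
        π (Z ω) k = (condDistrib t (fun ω => b (Z ω)) μ (b (Z ω)) {k}).toReal :=
      ae_all_iff.mpr h_all
    filter_upwards [h_ae] with ω hω
    funext k
    exact hω k
end

section
/- The propensity score map z ↦ π(z) restricted to its strictly positive part is injective if and only if the map g(z) = (log p(z|t=1) − log p(z|t=0), ..., log p(z|t=T) − log p(z|t=0)) is injective. -/
open scoped BigOperators

/-- With strictly positive class-conditional densities `p(z|t)` and strictly
positive priors, the propensity score map `π` (which is strictly positive) is injective if
and only if the log-likelihood-ratio map
`g(z) = (log p(z|t=k) − log p(z|t=0))_{k=1}^T` is injective. -/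
theorem propensity_injective_iff_log_ratio_injective
    {𝒵 : Type*} {T : ℕ}
    (p : Fin (T + 1) → 𝒵 → ℝ) (w : Fin (T + 1) → ℝ)
    (hp_pos : ∀ k z, 0 < p k z) (hw_pos : ∀ k, 0 < w k)
    (π : 𝒵 → Fin (T + 1) → ℝ)
    (hπ : π = fun z k => p k z * w k / ∑ i, p i z * w i)
    (g : 𝒵 → Fin T → ℝ)
    (hg : g = fun z i => Real.log (p i.succ z) - Real.log (p 0 z)) :
    Function.Injective π ↔ Function.Injective g := by
  subst hπ; subst hg
  have hS : ∀ z, 0 < ∑ i, p i z * w i := fun z =>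
    Finset.sum_pos (fun i _ => mul_pos (hp_pos i z) (hw_pos i)) Finset.univ_nonempty
  have key : ∀ z z' : 𝒵,
      ((fun k => p k z * w k / ∑ i, p i z * w i) =
        (fun k => p k z' * w k / ∑ i, p i z' * w i)) ↔
      ((fun i : Fin T => Real.log (p i.succ z) - Real.log (p 0 z)) =
        (fun i : Fin T => Real.log (p i.succ z') - Real.log (p 0 z'))) := by
    intro z z'
    have hmid1 : ((fun k => p k z * w k / ∑ i, p i z * w i) =
        (fun k => p k z' * w k / ∑ i, p i z' * w i)) ↔
        (∀ k, p k z * p 0 z' = p k z' * p 0 z) := by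
      constructor
      · intro h k
        have hk := congrFun h k
        have h0 := congrFun h 0
        have hk' : p k z * w k * (∑ i, p i z' * w i) =
            p k z' * w k * (∑ i, p i z * w i) :=
          (div_eq_div_iff (hS z).ne' (hS z').ne').mp hk
        have h0' : p 0 z * w 0 * (∑ i, p i z' * w i) =
            p 0 z' * w 0 * (∑ i, p i z * w i) :=
          (div_eq_div_iff (hS z).ne' (hS z').ne').mp h0
        have hk'' : p k z * (∑ i, p i z' * w i) = p k z' * (∑ i, p i z * w i) := by
          apply mul_left_cancel₀ (hw_pos k).ne'
          linear_combination hk'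
        have h0'' : p 0 z * (∑ i, p i z' * w i) = p 0 z' * (∑ i, p i z * w i) := by
          apply mul_left_cancel₀ (hw_pos 0).ne'
          linear_combination h0'
        apply mul_left_cancel₀ (mul_pos (hS z) (hS z')).ne'
        linear_combination (p 0 z' * (∑ i, p i z * w i)) * hk'' -
          (p k z' * (∑ i, p i z * w i)) * h0''
      · intro hR
        have hSS : p 0 z' * (∑ i, p i z * w i) = p 0 z * (∑ i, p i z' * w i) := by
          rw [Finset.mul_sum, Finset.mul_sum]
          refine Finset.sum_congr rfl fun i _ => ?_
          linear_combination w i * hR i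
        funext k
        rw [div_eq_div_iff (hS z).ne' (hS z').ne']
        apply mul_left_cancel₀ (mul_pos (hp_pos 0 z) (hp_pos 0 z')).ne'
        linear_combination (w k * p 0 z * (∑ i, p i z' * w i)) * hR k -
          (w k * p k z' * p 0 z) * hSS
    have hmid2 : ((fun i : Fin T => Real.log (p i.succ z) - Real.log (p 0 z)) =
        (fun i : Fin T => Real.log (p i.succ z') - Real.log (p 0 z'))) ↔
        (∀ k, p k z * p 0 z' = p k z' * p 0 z) := by
      constructor
      · intro h k
        induction k using Fin.cases with
        | zero => ring
        | succ i =>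
          have hi := congrFun h i
          rw [← Real.log_div (hp_pos i.succ z).ne' (hp_pos 0 z).ne',
            ← Real.log_div (hp_pos i.succ z').ne' (hp_pos 0 z').ne'] at hi
          have := congrArg Real.exp hi
          rw [Real.exp_log (div_pos (hp_pos i.succ z) (hp_pos 0 z)),
            Real.exp_log (div_pos (hp_pos i.succ z') (hp_pos 0 z'))] at this
          exact (div_eq_div_iff (hp_pos 0 z).ne' (hp_pos 0 z').ne').mp this
      · intro hR
        funext i
        have : p i.succ z / p 0 z = p i.succ z' / p 0 z' :=
          (div_eq_div_iff (hp_pos 0 z).ne' (hp_pos 0 z').ne').mpr (hR i.succ)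
        rw [← Real.log_div (hp_pos i.succ z).ne' (hp_pos 0 z).ne',
          ← Real.log_div (hp_pos i.succ z').ne' (hp_pos 0 z').ne', this]
    exact hmid1.trans hmid2.symm
  constructor
  · intro h z z' hzz'
    exact h ((key z z').mpr hzz')
  · intro h z z' hzz'
    exact h ((key z z').mp hzz')
end

section
/- Any solution M of the discrete Kantorovich optimal transport problem with cost c has support {(i,j) : M_{ij} > 0} that is c-cyclically monotone: for any finite sequence of pairs (x_1,y_1),...,(x_N,y_N) in the support, Σ_n c(x_n, y_n) ≤ Σ_n c(x_n, y_{n+1}) with y_{N+1} := y_1. -/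
open scoped BigOperators

/-- Any solution of the discrete Kantorovich problem has `c`-cyclically
monotone support: for any finite cycle of pairs in the support, cyclically shifting the
targets does not decrease the total cost. -/
theorem optimal_plan_support_cyclically_monotone
    {X Y : Type*} {n₁ n₂ : ℕ}
    (c : X → Y → ℝ) (x : Fin n₁ → X) (y : Fin n₂ → Y)
    (p₁ : Fin n₁ → ℝ) (p₂ : Fin n₂ → ℝ)
    (M : Fin n₁ → Fin n₂ → ℝ)
    (hM_nonneg : ∀ i j, 0 ≤ M i j)
    (hM_rows : ∀ i, ∑ j, M i j = p₁ i)
    (hM_cols : ∀ j, ∑ i, M i j = p₂ j)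
    (hM_opt : ∀ M' : Fin n₁ → Fin n₂ → ℝ,
      (∀ i j, 0 ≤ M' i j) → (∀ i, ∑ j, M' i j = p₁ i) → (∀ j, ∑ i, M' i j = p₂ j) →
      ∑ i, ∑ j, c (x i) (y j) * M i j ≤ ∑ i, ∑ j, c (x i) (y j) * M' i j) :
    ∀ N : ℕ, ∀ I : Fin (N + 1) → Fin n₁ × Fin n₂,
      (∀ m, 0 < M (I m).1 (I m).2) →
      ∑ m : Fin (N + 1), c (x (I m).1) (y (I m).2) ≤
        ∑ m : Fin (N + 1), c (x (I m).1) (y (I (m + 1)).2) := by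
  intro N I hI
  classical
  set A : Fin n₁ → Fin n₂ → ℝ := fun i j =>
    ∑ m : Fin (N+1), (if (I m).1 = i ∧ (I (m + 1)).2 = j then (1:ℝ) else 0) with hA_def
  set B : Fin n₁ → Fin n₂ → ℝ := fun i j =>
    ∑ m : Fin (N+1), (if I m = (i, j) then (1:ℝ) else 0) with hB_def
  obtain ⟨μ, hμpos, hμle⟩ : ∃ μ > 0, ∀ m, μ ≤ M (I m).1 (I m).2 := by
    refine ⟨Finset.univ.inf' ⟨0, Finset.mem_univ 0⟩ (fun m => M (I m).1 (I m).2), ?_, ?_⟩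
    · exact (Finset.lt_inf'_iff _).2 fun m _ => hI m
    · intro m; exact Finset.inf'_le _ (Finset.mem_univ m)
  set ε : ℝ := μ / (N + 1) with hε_def
  have hε : 0 < ε := div_pos hμpos (by positivity)
  set M' : Fin n₁ → Fin n₂ → ℝ := fun i j => M i j + ε * (A i j - B i j) with hM'_def
  have hAnn : ∀ i j, 0 ≤ A i j := fun i j =>
    Finset.sum_nonneg (fun m _ => by split <;> norm_num)
  have hBnn : ∀ i j, 0 ≤ B i j := fun i j =>
    Finset.sum_nonneg (fun m _ => by split <;> norm_num)
  have hBle : ∀ i j, B i j ≤ N + 1 := by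
    intro i j
    calc B i j ≤ ∑ _m : Fin (N+1), (1:ℝ) :=
          Finset.sum_le_sum (fun m _ => by split <;> norm_num)
      _ = N + 1 := by simp
  have hnn : ∀ i j, 0 ≤ M' i j := by
    intro i j
    by_cases h : ∃ m, I m = (i, j)
    · obtain ⟨m, hm⟩ := h
      have h1 : μ ≤ M i j := by have := hμle m; rw [hm] at this; exact this
      have h2 : ε * B i j ≤ μ := by
        have : ε * B i j ≤ ε * (N + 1) := by nlinarith [hBle i j]
        have h3 : ε * (N + 1) = μ := by
          rw [hε_def]; field_simp
        linarith
      have := hAnn i j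
      simp only [hM'_def]
      nlinarith
    · have hB : B i j = 0 := Finset.sum_eq_zero (fun m _ => by
        rw [if_neg]; exact fun hc => h ⟨m, hc⟩)
      have := hAnn i j
      have := hM_nonneg i j
      simp only [hM'_def, hB]
      nlinarith
  have hArow : ∀ i, ∑ j, A i j = ∑ m : Fin (N+1), (if (I m).1 = i then (1:ℝ) else 0) := by
    intro i
    rw [Finset.sum_comm]
    refine Finset.sum_congr rfl fun m _ => ?_
    by_cases h : (I m).1 = i
    · simp [h, Finset.sum_ite_eq]
    · simp [h]
  have hBrow : ∀ i, ∑ j, B i j = ∑ m : Fin (N+1), (if (I m).1 = i then (1:ℝ) else 0) := by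
    intro i
    rw [Finset.sum_comm]
    refine Finset.sum_congr rfl fun m _ => ?_
    by_cases h : (I m).1 = i
    · simp only [h, if_true]
      rw [Finset.sum_eq_single (I m).2]
      · rw [if_pos]; exact Prod.ext h rfl
      · intro b _ hb; rw [if_neg]; exact fun hc => hb ((Prod.ext_iff.mp hc).2.symm ▸ rfl)
      · intro hb; exact absurd (Finset.mem_univ _) hb
    · simp only [h, if_false]
      exact Finset.sum_eq_zero fun b _ => by
        rw [if_neg]; exact fun hc => h (Prod.ext_iff.mp hc).1
  have hAcol : ∀ j, ∑ i, A i j = ∑ m : Fin (N+1), (if (I m).2 = j then (1:ℝ) else 0) := by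
    intro j
    rw [Finset.sum_comm]
    have : ∀ m : Fin (N+1),
        (∑ i, if (I m).1 = i ∧ (I (m + 1)).2 = j then (1:ℝ) else 0)
          = if (I (m + 1)).2 = j then (1:ℝ) else 0 := by
      intro m
      by_cases h : (I (m + 1)).2 = j
      · simp [h, Finset.sum_ite_eq]
      · simp [h]
    rw [Finset.sum_congr rfl fun m _ => this m]
    exact Fintype.sum_equiv (Equiv.addRight (1 : Fin (N+1)))
      (fun m => if (I (m + 1)).2 = j then (1:ℝ) else 0)
      (fun m => if (I m).2 = j then (1:ℝ) else 0) (fun m => rfl)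
  have hBcol : ∀ j, ∑ i, B i j = ∑ m : Fin (N+1), (if (I m).2 = j then (1:ℝ) else 0) := by
    intro j
    rw [Finset.sum_comm]
    refine Finset.sum_congr rfl fun m _ => ?_
    by_cases h : (I m).2 = j
    · simp only [h, if_true]
      rw [Finset.sum_eq_single (I m).1]
      · rw [if_pos]; exact Prod.ext rfl h
      · intro b _ hb; rw [if_neg]; exact fun hc => hb ((Prod.ext_iff.mp hc).1.symm ▸ rfl)
      · intro hb; exact absurd (Finset.mem_univ _) hb
    · simp only [h, if_false]
      exact Finset.sum_eq_zero fun b _ => by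
        rw [if_neg]; exact fun hc => h (Prod.ext_iff.mp hc).2
  have hrow : ∀ i, ∑ j, M' i j = p₁ i := by
    intro i
    simp only [hM'_def]
    rw [Finset.sum_add_distrib, ← Finset.mul_sum, Finset.sum_sub_distrib,
      hArow i, hBrow i, hM_rows i]
    ring
  have hcol : ∀ j, ∑ i, M' i j = p₂ j := by
    intro j
    simp only [hM'_def]
    rw [Finset.sum_add_distrib, ← Finset.mul_sum, Finset.sum_sub_distrib,
      hAcol j, hBcol j, hM_cols j]
    ring
  have hcA : ∑ i, ∑ j, c (x i) (y j) * A i j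
      = ∑ m : Fin (N+1), c (x (I m).1) (y (I (m + 1)).2) := by
    have step : ∀ i, ∑ j, c (x i) (y j) * A i j
        = ∑ m : Fin (N+1), ∑ j, c (x i) (y j) *
            (if (I m).1 = i ∧ (I (m + 1)).2 = j then (1:ℝ) else 0) := by
      intro i
      simp only [hA_def, Finset.mul_sum]
      exact Finset.sum_comm ..
    rw [Finset.sum_congr rfl fun i _ => step i, Finset.sum_comm]
    refine Finset.sum_congr rfl fun m _ => ?_
    rw [Finset.sum_eq_single (I m).1]
    · rw [Finset.sum_eq_single (I (m + 1)).2]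
      · simp
      · intro b _ hb
        have hne : ¬((I m).1 = (I m).1 ∧ (I (m + 1)).2 = b) := fun hc => hb hc.2.symm
        rw [if_neg hne, mul_zero]
      · intro hb; exact absurd (Finset.mem_univ _) hb
    · intro a _ ha
      refine Finset.sum_eq_zero fun b _ => ?_
      have hne : ¬((I m).1 = a ∧ (I (m + 1)).2 = b) := fun hc => ha hc.1.symm
      rw [if_neg hne, mul_zero]
    · intro hb; exact absurd (Finset.mem_univ _) hb
  have hcB : ∑ i, ∑ j, c (x i) (y j) * B i j
      = ∑ m : Fin (N+1), c (x (I m).1) (y (I m).2) := by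
    have step : ∀ i, ∑ j, c (x i) (y j) * B i j
        = ∑ m : Fin (N+1), ∑ j, c (x i) (y j) *
            (if I m = (i, j) then (1:ℝ) else 0) := by
      intro i
      simp only [hB_def, Finset.mul_sum]
      exact Finset.sum_comm ..
    rw [Finset.sum_congr rfl fun i _ => step i, Finset.sum_comm]
    refine Finset.sum_congr rfl fun m _ => ?_
    rw [Finset.sum_eq_single (I m).1]
    · rw [Finset.sum_eq_single (I m).2]
      · simp
      · intro b _ hb
        have hne : ¬(I m = ((I m).1, b)) := fun hc => hb (Prod.ext_iff.mp hc).2.symm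
        rw [if_neg hne, mul_zero]
      · intro hb; exact absurd (Finset.mem_univ _) hb
    · intro a _ ha
      refine Finset.sum_eq_zero fun b _ => ?_
      have hne : ¬(I m = (a, b)) := fun hc => ha (Prod.ext_iff.mp hc).1.symm
      rw [if_neg hne, mul_zero]
    · intro hb; exact absurd (Finset.mem_univ _) hb
  have hcost : ∑ i, ∑ j, c (x i) (y j) * M' i j
      = (∑ i, ∑ j, c (x i) (y j) * M i j)
        + ε * ((∑ m : Fin (N+1), c (x (I m).1) (y (I (m + 1)).2))
          - ∑ m : Fin (N+1), c (x (I m).1) (y (I m).2)) := by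
    have expand : ∀ i j, c (x i) (y j) * M' i j
        = c (x i) (y j) * M i j
          + ε * (c (x i) (y j) * A i j - c (x i) (y j) * B i j) := by
      intro i j; simp only [hM'_def]; ring
    calc ∑ i, ∑ j, c (x i) (y j) * M' i j
        = ∑ i, ∑ j, (c (x i) (y j) * M i j
            + ε * (c (x i) (y j) * A i j - c (x i) (y j) * B i j)) := by
          exact Finset.sum_congr rfl fun i _ => Finset.sum_congr rfl fun j _ => expand i j
      _ = (∑ i, ∑ j, c (x i) (y j) * M i j)
            + ε * ((∑ i, ∑ j, c (x i) (y j) * A i j)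
              - ∑ i, ∑ j, c (x i) (y j) * B i j) := by
          simp only [Finset.sum_add_distrib, Finset.sum_sub_distrib, ← Finset.mul_sum]
      _ = _ := by rw [hcA, hcB]
  have key := hM_opt M' hnn hrow hcol
  rw [hcost] at key
  have h0 : 0 ≤ ε * ((∑ m : Fin (N+1), c (x (I m).1) (y (I (m + 1)).2))
      - ∑ m : Fin (N+1), c (x (I m).1) (y (I m).2)) := by linarith
  nlinarith [h0, hε, mul_pos hε hε]
end
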